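/- For every g ≥ 1 the genus-g free energies of the resolved conifold satisfy the recursion Σ_{k=0}^{g} 1/((2g−2k+2)!)·((1/2π)·∂/∂t)^{2g−2k+2} F̃ᵏ(t) = 0, equivalently, coefficient-wise in q: for each n ≥ 1 and g ≥ 1, Σ_{k=0}^{g} (in)^{2g−2k+2}/((2g−2k+2)!)·aₖ·n^{−3+2k} = 0, where a₀ = 1 and aₖ = (−1)^{k−1}B_{2k}/(2k·(2k−2)!) for k ≥ 1. -/
import Mathlib


open Complex

section Aux

open Finset

private lemma srg_even_odd {M : Type*} [AddCommMonoid M] (f : ℕ → M) (N : ℕ) :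
    ∑ i ∈ Finset.range (2*N+1), f i =
      (∑ j ∈ Finset.range (N+1), f (2*j)) + ∑ j ∈ Finset.range N, f (2*j+1) := by
  induction N with
  | zero => simp
  | succ N ih =>
    have h1 : 2*(N+1)+1 = (2*N+1)+1+1 := by ring
    have e1 : 2*N+1+1 = 2*(N+1) := by ring
    rw [h1, Finset.sum_range_succ, Finset.sum_range_succ, ih,
      Finset.sum_range_succ (fun j => f (2*j)) (N+1),
      Finset.sum_range_succ (fun j => f (2*j+1)) N, e1]
    abel

private lemma derivEval (m : ℕ) :
    ∑ i ∈ range (m+1), (bernoulli i) * (m.choose i) * ((m:ℚ) - i) = m * bernoulli' (m-1) := by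
  have h := congrArg (Polynomial.eval (1:ℚ)) (Polynomial.derivative_bernoulli m)
  rw [Polynomial.bernoulli] at h
  simp only [Polynomial.derivative_sum, Polynomial.derivative_monomial, Polynomial.eval_finset_sum,
    Polynomial.eval_monomial, one_pow, mul_one, Polynomial.eval_mul, Polynomial.eval_natCast,
    Polynomial.bernoulli_eval_one] at h
  rw [← h]
  apply Finset.sum_congr rfl
  intro i hi
  rw [Finset.mem_range] at hi
  have hle : i ≤ m := by omega
  have : ((m - i : ℕ) : ℚ) = (m : ℚ) - i := by push_cast [hle]; ring
  rw [this]

private lemma sumB (m : ℕ) (hm : m ≠ 1) :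
    ∑ i ∈ range (m+1), (m.choose i : ℚ) * bernoulli i = bernoulli m := by
  rw [Finset.sum_range_succ, sum_bernoulli]
  simp [hm]

private lemma keyQ (g : ℕ) (hg : 1 ≤ g) :
    ∑ j ∈ Finset.range g,
      (2*(j:ℚ)+1) * (((2*g+2).choose (2*j+2) : ℕ) : ℚ) * bernoulli (2*j+2) = 1 := by
  set m := 2*g+2 with hm
  set f : ℕ → ℚ := fun i => bernoulli i * (m.choose i) * ((i:ℚ) - 1) with hf
  have hodd : bernoulli' (m-1) = 0 := by
    apply bernoulli'_eq_zero_of_odd ⟨g, by omega⟩ (by omega)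
  have hT : ∑ i ∈ range (m+1), f i = ((m:ℚ) - 1) * bernoulli m := by
    have h1 : ∀ i ∈ range (m+1), f i
        = -(bernoulli i * (m.choose i) * ((m:ℚ) - i))
          + ((m:ℚ)-1) * ((m.choose i : ℚ) * bernoulli i) := by
      intro i _; simp only [hf]; ring
    rw [Finset.sum_congr rfl h1, Finset.sum_add_distrib, ← Finset.mul_sum,
      Finset.sum_neg_distrib, derivEval, sumB m (by omega), hodd]
    ring
  have hsplit := srg_even_odd f (g+1)
  have hrw : 2*(g+1)+1 = m + 1 := by omega
  rw [hrw, hT] at hsplit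
  have hoddsum : ∑ j ∈ Finset.range (g+1), f (2*j+1) = 0 := by
    apply Finset.sum_eq_zero
    intro j _
    rcases Nat.eq_zero_or_pos j with h | h
    · simp [hf, h]
    · have : bernoulli (2*j+1) = 0 := by
        rw [bernoulli_eq_bernoulli'_of_ne_one (by omega)]
        exact bernoulli'_eq_zero_of_odd ⟨j, by omega⟩ (by omega)
      simp [hf, this]
  rw [hoddsum, add_zero] at hsplit
  rw [Finset.sum_range_succ, Finset.sum_range_succ'] at hsplit
  have hf0 : f (2*0) = -1 := by simp [hf]
  have hfm : f (2*(g+1)) = ((m:ℚ)-1) * bernoulli m := by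
    have : 2*(g+1) = m := by omega
    rw [this]
    simp [hf, Nat.choose_self]
    ring
  rw [hf0, hfm] at hsplit
  have htot : ∑ j ∈ Finset.range g, f (2*(j+1)) = 1 := by linarith
  refine Eq.trans (Finset.sum_congr rfl ?_) htot
  intro j _
  symm
  have e : 2*(j+1) = 2*j+2 := by ring
  rw [e]
  simp only [hf]
  push_cast
  ring

private lemma keyQ' (g : ℕ) (hg : 1 ≤ g) :
    ∑ j ∈ Finset.range g, bernoulli (2*j+2) /
      ((2*(j:ℚ)+2) * ((2*j).factorial : ℚ) * (((2*g-2*j).factorial : ℕ) : ℚ))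
      = 1 / (((2*g+2).factorial : ℕ) : ℚ) := by
  rw [eq_div_iff (by exact_mod_cast (Nat.factorial_pos _).ne'), ← keyQ g hg, Finset.sum_mul]
  apply Finset.sum_congr rfl
  intro j hj
  rw [Finset.mem_range] at hj
  have hfact : ((2*g+2).choose (2*j+2)) * (2*j+2).factorial * (2*g-2*j).factorial
      = (2*g+2).factorial := by
    have h := Nat.choose_mul_factorial_mul_factorial (show 2*j+2 ≤ 2*g+2 by omega)
    rw [show 2*g+2 - (2*j+2) = 2*g-2*j by omega] at h
    exact h
  have hft : (2*j+2).factorial = (2*j+2)*((2*j+1)*(2*j).factorial) := by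
    rw [show 2*j+2 = (2*j+1)+1 by ring, Nat.factorial_succ, Nat.factorial_succ]
  have hQ : (((2*g+2).choose (2*j+2) : ℚ)) * ((2*(j:ℚ)+2)*((2*(j:ℚ)+1)*((2*j).factorial : ℚ)))
      * (((2*g-2*j).factorial : ℕ) : ℚ) = (((2*g+2).factorial : ℕ) : ℚ) := by
    rw [← hfact, hft]
    push_cast
    ring
  have hne1 : (2*(j:ℚ)+2) ≠ 0 := by positivity
  have hne2 : ((2*j).factorial : ℚ) ≠ 0 := by exact_mod_cast (Nat.factorial_pos _).ne'
  have hne3 : (((2*g-2*j).factorial : ℕ) : ℚ) ≠ 0 := by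
    exact_mod_cast (Nat.factorial_pos _).ne'
  field_simp
  linear_combination -(bernoulli (2*j+2) * hQ)

private lemma keyC (g : ℕ) (hg : 1 ≤ g) :
    ∑ j ∈ Finset.range g, ((bernoulli (2*j+2) : ℚ) : ℂ) /
      ((2*(j:ℂ)+2) * ((2*j).factorial : ℂ) * (((2*g-2*j).factorial : ℕ) : ℂ))
      = 1 / (((2*g+2).factorial : ℕ) : ℂ) := by
  have h := congrArg (fun x : ℚ => (x : ℂ)) (keyQ' g hg)
  push_cast at h
  exact_mod_cast h

end Aux

/-- The genus-`k` coefficients: `a₀ = 1`, `aₖ = (−1)^{k−1}·B_{2k}/(2k·(2k−2)!)` for `k ≥ 1`. -/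
noncomputable def genusCoeff (k : ℕ) : ℂ :=
  if k = 0 then 1
  else (-1) ^ (k - 1) * ((bernoulli (2 * k) : ℚ) : ℂ) / (2 * k * (2 * k - 2).factorial)

/-- The genus recursion `Σ_{k=0}^{g} 1/((2g−2k+2)!)·((1/2π)∂_t)^{2g−2k+2} F̃ᵏ(t) = 0` for the
resolved conifold, coefficient-wise in `q`: for each `n ≥ 1` and `g ≥ 1`,
`Σ_{k=0}^{g} (in)^{2g−2k+2}/((2g−2k+2)!)·aₖ·n^{2k−3} = 0`. -/
theorem genus_recursion (n : ℕ) (hn : 1 ≤ n) (g : ℕ) (hg : 1 ≤ g) :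
    ∑ k ∈ Finset.range (g + 1),
      (I * n) ^ (2 * g - 2 * k + 2) / ((2 * g - 2 * k + 2).factorial : ℂ) *
        genusCoeff k * (n : ℂ) ^ (2 * (k : ℤ) - 3) = 0 := by
  have hn0 : (n : ℂ) ≠ 0 := Nat.cast_ne_zero.mpr (by omega)
  have hterm : ∀ k ∈ Finset.range (g+1),
      (I * n) ^ (2 * g - 2 * k + 2) / ((2 * g - 2 * k + 2).factorial : ℂ) *
        genusCoeff k * (n : ℂ) ^ (2 * (k : ℤ) - 3)
      = ((-1)^(g+1) * (n:ℂ)^(2*(g:ℤ)-1)) *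
          ((-1)^k * genusCoeff k / ((2 * g - 2 * k + 2).factorial : ℂ)) := by
    intro k hk
    rw [Finset.mem_range] at hk
    have hkg : k ≤ g := by omega
    have he : 2*g - 2*k + 2 = 2*(g-k+1) := by omega
    rw [he]
    have h1 : (I*(n:ℂ))^(2*(g-k+1)) = (-1)^(g-k+1) * (n:ℂ)^(2*(g-k+1)) := by
      rw [pow_mul, show (I*(n:ℂ))^2 = -((n:ℂ)^2) by rw [mul_pow, I_sq]; ring, neg_pow, ← pow_mul]
    have h2 : (n:ℂ)^(2*(g-k+1)) * (n:ℂ)^(2*(k:ℤ)-3) = (n:ℂ)^(2*(g:ℤ)-1) := by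
      rw [← zpow_natCast (n:ℂ) (2*(g-k+1)), ← zpow_add₀ hn0]
      congr 1
      omega
    have h3 : ((-1:ℂ))^(g-k+1) = (-1)^(g+1) * (-1)^k := by
      have hk2 : ((-1:ℂ))^k * (-1)^k = 1 := by
        rw [← pow_add]
        exact Even.neg_one_pow ⟨k, rfl⟩
      have hgk : ((-1:ℂ))^(g-k+1) * (-1)^k = (-1)^(g+1) := by
        rw [← pow_add, show g-k+1+k = g+1 by omega]
      linear_combination ((-1:ℂ))^k * hgk - ((-1:ℂ))^(g-k+1) * hk2
    rw [h1, h3, ← h2]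
    ring
  rw [Finset.sum_congr rfl hterm, ← Finset.mul_sum]
  apply mul_eq_zero_of_right
  rw [Finset.sum_range_succ']
  have h0 : ((-1:ℂ))^0 * genusCoeff 0 / ((2*g - 2*0 + 2).factorial : ℂ)
      = 1 / (((2*g+2).factorial : ℕ) : ℂ) := by
    simp [genusCoeff]
  have hsum : ∑ j ∈ Finset.range g,
      (-1:ℂ)^(j+1) * genusCoeff (j+1) / ((2*g - 2*(j+1) + 2).factorial : ℂ)
      = -(1 / (((2*g+2).factorial : ℕ) : ℂ)) := by
    rw [← keyC g hg, ← Finset.sum_neg_distrib]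
    apply Finset.sum_congr rfl
    intro j hj
    rw [Finset.mem_range] at hj
    have e : 2*g - 2*(j+1) + 2 = 2*g - 2*j := by omega
    rw [e]
    have hgc : genusCoeff (j+1)
        = (-1)^j * ((bernoulli (2*j+2) : ℚ) : ℂ) / ((2*(j:ℂ)+2) * ((2*j).factorial : ℂ)) := by
      rw [genusCoeff, if_neg (Nat.succ_ne_zero j),
        show 2*(j+1) = 2*j+2 by ring, Nat.add_sub_cancel, show 2*j+2-2 = 2*j by omega]
      push_cast
      ring
    rw [hgc]
    have hs : (-1:ℂ)^(j+1) * (-1)^j = -1 := by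
      rw [← pow_add, show j+1+j = 2*j+1 by ring, pow_succ, pow_mul]
      norm_num
    have hd1 : (2*(j:ℂ)+2) ≠ 0 := by
      have : (0:ℝ) < 2*(j:ℝ)+2 := by positivity
      exact_mod_cast (by push_cast; exact_mod_cast this.ne' : (2*(j:ℂ)+2) ≠ 0)
    have hd2 : ((2*j).factorial : ℂ) ≠ 0 := Nat.cast_ne_zero.mpr (Nat.factorial_pos _).ne'
    have hd3 : (((2*g-2*j).factorial : ℕ) : ℂ) ≠ 0 := Nat.cast_ne_zero.mpr (Nat.factorial_pos _).ne'
    field_simp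
    have hsq : ((-1:ℂ))^(j*2) = 1 := Even.neg_one_pow ⟨j, by ring⟩
    linear_combination (-(((bernoulli (2*j+2) : ℚ) : ℂ))) * hsq
  rw [hsum, h0]
  ring
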